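/- arXiv:1405.2321 — 2 statements merged into one kernel-verified Lean document; each statement's English description precedes it below -/
import Mathlib

section
/- There exist constants M₀ > 0, ε₀ > 0 and L > 0 such that whenever ξ(1,1) < M₀, |h₁| < M₀ and |h₂| < M₀, the following stability holds: if (a,b) ∈ [0,1)² and 0 ≤ ε ≤ ε₀ satisfy |h₁² + ∂ₓξ(a,b)/γ − a/(1−a)²| ≤ ε and |h₂² + ∂_yξ(a,b)/(1−γ) − b/(1−b)²| ≤ ε, then |a − a₀| ≤ Lε and |b − b₀| ≤ Lε, where (a₀,b₀) ∈ [0,1)² is the unique solution of h₁² + ∂ₓξ(a₀,b₀)/γ = a₀/(1−a₀)² and h₂² + ∂_yξ(a₀,b₀)/(1−γ) = b₀/(1−b₀)². -/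
open Set

/-- The mixed bipartite covariance function `ξ(x,y) = Σ_{p,q} β_{p,q}² xᵖ y^q`. -/
noncomputable def xiFn (β : ℕ → ℕ → ℝ) (x y : ℝ) : ℝ :=
  ∑' pq : ℕ × ℕ, (β pq.1 pq.2) ^ 2 * x ^ pq.1 * y ^ pq.2

/-- `∂ₓξ(x,y)`, given by termwise differentiation. -/
noncomputable def dxXi (β : ℕ → ℕ → ℝ) (x y : ℝ) : ℝ :=
  ∑' pq : ℕ × ℕ, (β pq.1 pq.2) ^ 2 * pq.1 * x ^ (pq.1 - 1) * y ^ pq.2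

/-- `∂_yξ(x,y)`, given by termwise differentiation. -/
noncomputable def dyXi (β : ℕ → ℕ → ℝ) (x y : ℝ) : ℝ :=
  ∑' pq : ℕ × ℕ, (β pq.1 pq.2) ^ 2 * pq.2 * x ^ pq.1 * y ^ (pq.2 - 1)

/-- `p ≤ 2^(p-1)` hence `p (1/2)^(p-1) ≤ 1`. -/
lemma coeff2 (p : ℕ) : (p : ℝ) * (1/2 : ℝ) ^ (p - 1) ≤ 1 := by
  rcases p with _ | n
  · simp
  · have h : (n + 1 : ℕ) ≤ 2 ^ n := Nat.lt_two_pow_self (n := n)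
    have h' : ((n:ℝ) + 1) ≤ 2 ^ n := by exact_mod_cast h
    have h2 : (0:ℝ) < 2 ^ n := by positivity
    have : (1/2 : ℝ) ^ n = 1 / 2 ^ n := by
      rw [div_pow, one_pow]
    simp only [Nat.add_sub_cancel, Nat.cast_add, Nat.cast_one, this]
    rw [mul_one_div, div_le_one h2]
    exact h'

lemma nat_sq (n : ℕ) : (n + 2) * (n + 1) ≤ 2 ^ (n + 2) := by
  induction n with
  | zero => norm_num
  | succ m ih =>
    rcases Nat.eq_zero_or_pos m with hm | hm
    · subst hm; norm_num
    · have h : (m + 1 + 2) * (m + 1 + 1) ≤ 2 * ((m + 2) * (m + 1)) := by nlinarith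
      calc (m + 1 + 2) * (m + 1 + 1) ≤ 2 * ((m + 2) * (m + 1)) := h
        _ ≤ 2 * 2 ^ (m + 2) := by omega
        _ = 2 ^ (m + 1 + 2) := by ring

lemma coeff1 (p : ℕ) : (p : ℝ) * ((p - 1 : ℕ) : ℝ) * (1/2 : ℝ) ^ (p - 2) ≤ 4 := by
  match p with
  | 0 => norm_num
  | 1 => norm_num
  | (n+2) =>
    have h : ((n+2) * (n+1) : ℕ) ≤ 2 ^ (n + 2) := nat_sq n
    have h' : ((n:ℝ)+2) * ((n:ℝ)+1) ≤ 2 ^ (n+2) := by exact_mod_cast h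
    have h2 : (0:ℝ) < 2 ^ n := by positivity
    have e1 : (n + 2 - 1 : ℕ) = n + 1 := by omega
    have e2 : (n + 2 - 2 : ℕ) = n := by omega
    rw [e1, e2]
    have : (1/2 : ℝ) ^ n = 1 / 2 ^ n := by rw [div_pow, one_pow]
    rw [this]
    push_cast
    rw [mul_one_div, div_le_iff₀ h2]
    have e3 : (2:ℝ) ^ (n+2) = 4 * 2 ^ n := by ring
    nlinarith [h', e3]

/-- `n a^(n-1) (1-a) ≤ 1 - a^n` for `a ∈ [0,1]`. -/
lemma pow_deriv_le (a : ℝ) (ha : 0 ≤ a) (ha1 : a ≤ 1) :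
    ∀ n : ℕ, (n : ℝ) * a ^ (n - 1) * (1 - a) ≤ 1 - a ^ n := by
  intro n
  induction n with
  | zero => simp
  | succ m ih =>
    rcases Nat.eq_zero_or_pos m with hm | hm
    · subst hm; simp
    · have e : (m + 1 - 1 : ℕ) = m := by omega
      rw [e]
      have e2 : a ^ m = a * a ^ (m - 1) := by
        conv_lhs => rw [show m = 1 + (m - 1) by omega]
        rw [pow_add, pow_one]
      have key : (m : ℝ) * a ^ m * (1 - a) ≤ a * (1 - a ^ m) := by
        calc (m : ℝ) * a ^ m * (1 - a) = a * ((m : ℝ) * a ^ (m-1) * (1 - a)) := by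
              rw [e2]; ring
          _ ≤ a * (1 - a ^ m) := by
              apply mul_le_mul_of_nonneg_left ih ha
      have hpow : a ^ m ≤ 1 := pow_le_one₀ ha ha1
      have hpow2 : a ^ (m+1) = a * a ^ m := by ring
      push_cast
      nlinarith [pow_nonneg ha m]

/-- hence `n a^(n-1) (1-a)^2 ≤ 1` on `[0,1]`. -/
lemma pow_deriv_sq_le (a : ℝ) (ha : 0 ≤ a) (ha1 : a ≤ 1) (n : ℕ) :
    (n : ℝ) * a ^ (n - 1) * (1 - a) ^ 2 ≤ 1 := by
  have h1 := pow_deriv_le a ha ha1 n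
  have h2 : (0:ℝ) ≤ 1 - a := by linarith
  have h3 : 1 - a ^ n ≤ 1 := by nlinarith [pow_nonneg ha n]
  nlinarith [mul_nonneg (mul_nonneg (Nat.cast_nonneg n : (0:ℝ) ≤ n) (pow_nonneg ha (n-1))) h2]

/-- Lipschitz bound for powers on `[0, 1/2]`. -/
lemma pow_lip (x y : ℝ) (hx : x ∈ Icc (0:ℝ) (1/2)) (hy : y ∈ Icc (0:ℝ) (1/2)) :
    ∀ n : ℕ, |x ^ n - y ^ n| ≤ (n : ℝ) * (1/2 : ℝ) ^ (n - 1) * |x - y| := by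
  obtain ⟨hx0, hx2⟩ := hx
  obtain ⟨hy0, hy2⟩ := hy
  intro n
  induction n with
  | zero => simp
  | succ m ih =>
    have e : (m + 1 - 1 : ℕ) = m := by omega
    rw [e]
    have key : x ^ (m+1) - y ^ (m+1) = x * (x ^ m - y ^ m) + (x - y) * y ^ m := by ring
    have hyp : |y ^ m| ≤ (1/2:ℝ) ^ m := by
      rw [abs_of_nonneg (pow_nonneg hy0 m)]
      exact pow_le_pow_left₀ hy0 hy2 m
    have hxa : |x| ≤ 1/2 := by rw [abs_of_nonneg hx0]; exact hx2
    have step1 : |x ^ (m+1) - y ^ (m+1)| ≤ |x| * |x ^ m - y ^ m| + |x - y| * |y ^ m| := by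
      rw [key]
      refine (abs_add_le _ _).trans ?_
      rw [abs_mul, abs_mul]
    have t1 : |x| * |x ^ m - y ^ m| ≤ (1/2) * ((m:ℝ) * (1/2:ℝ)^(m-1) * |x - y|) :=
      mul_le_mul hxa ih (abs_nonneg _) (by norm_num)
    have t2 : |x - y| * |y ^ m| ≤ |x - y| * (1/2:ℝ)^m :=
      mul_le_mul_of_nonneg_left hyp (abs_nonneg _)
    have step2 : (1/2) * ((m:ℝ) * (1/2:ℝ)^(m-1) * |x - y|) + |x - y| * (1/2:ℝ)^m
        ≤ ((m:ℝ) + 1) * (1/2:ℝ) ^ m * |x - y| := by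
          have e2 : (1/2:ℝ) * (1/2:ℝ)^(m-1) ≤ (1/2:ℝ)^m := by
            rcases Nat.eq_zero_or_pos m with hm | hm
            · subst hm; norm_num
            · apply le_of_eq
              rw [← pow_succ']
              congr 1
              omega
          have h3 : (m:ℝ) * ((1/2)*(1/2:ℝ)^(m-1)) * |x-y| ≤ (m:ℝ) * (1/2:ℝ)^m * |x-y| := by
            apply mul_le_mul_of_nonneg_right _ (abs_nonneg _)
            exact mul_le_mul_of_nonneg_left e2 (Nat.cast_nonneg m)
          nlinarith [h3]

    calc |x ^ (m+1) - y ^ (m+1)| ≤ |x| * |x ^ m - y ^ m| + |x - y| * |y ^ m| := step1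
      _ ≤ (1/2) * ((m:ℝ) * (1/2:ℝ)^(m-1) * |x - y|) + |x - y| * (1/2:ℝ)^m := by linarith
      _ ≤ ((m:ℝ) + 1) * (1/2:ℝ) ^ m * |x - y| := step2
      _ = ((m+1 : ℕ) : ℝ) * (1/2:ℝ) ^ m * |x - y| := by push_cast; ring

section
variable {β : ℕ → ℕ → ℝ}

lemma xiFn_one_one : xiFn β 1 1 = ∑' pq : ℕ × ℕ, (β pq.1 pq.2) ^ 2 := by
  simp [xiFn]

lemma summable_sq (hK : Summable fun pq : ℕ × ℕ => (2:ℝ)^(pq.1+pq.2) * (β pq.1 pq.2)^2) :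
    Summable fun pq : ℕ × ℕ => (β pq.1 pq.2)^2 := by
  apply Summable.of_nonneg_of_le (fun pq => sq_nonneg _) _ hK
  intro pq
  have h2 : (1:ℝ) ≤ 2 ^ (pq.1 + pq.2) := one_le_pow₀ (by norm_num)
  nlinarith [sq_nonneg (β pq.1 pq.2)]

lemma xiFn_nonneg : 0 ≤ xiFn β 1 1 := by
  rw [xiFn_one_one]; exact tsum_nonneg fun pq => sq_nonneg _

lemma summable_dx (hK : Summable fun pq : ℕ × ℕ => (2:ℝ)^(pq.1+pq.2) * (β pq.1 pq.2)^2)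
    {a b : ℝ} (ha : a ∈ Icc (0:ℝ) 1) (hb : b ∈ Icc (0:ℝ) 1) :
    Summable fun pq : ℕ × ℕ => (β pq.1 pq.2)^2 * pq.1 * a^(pq.1-1) * b^pq.2 := by
  apply Summable.of_nonneg_of_le _ _ hK
  · intro pq
    exact mul_nonneg (mul_nonneg (mul_nonneg (sq_nonneg _) (Nat.cast_nonneg _))
      (pow_nonneg ha.1 _)) (pow_nonneg hb.1 _)
  · intro pq
    obtain ⟨p, q⟩ := pq
    have hp : (p:ℝ) ≤ 2 ^ (p + q) := by
      have h1 : p < 2 ^ p := Nat.lt_two_pow_self (n := p)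
      have h2 : (2:ℕ) ^ p ≤ 2 ^ (p+q) := Nat.pow_le_pow_right (by norm_num) (by omega)
      exact_mod_cast (h1.le.trans h2)
    have ha1 : a ^ (p-1) ≤ 1 := pow_le_one₀ ha.1 ha.2
    have hb1 : b ^ q ≤ 1 := pow_le_one₀ hb.1 hb.2
    have ha0 : (0:ℝ) ≤ a ^ (p-1) := pow_nonneg ha.1 _
    have hb0 : (0:ℝ) ≤ b ^ q := pow_nonneg hb.1 _
    have hs : (0:ℝ) ≤ (β p q)^2 := sq_nonneg _
    calc (β p q)^2 * p * a^(p-1) * b^q ≤ (β p q)^2 * (2^(p+q)) * 1 * 1 := by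
          apply mul_le_mul _ hb1 hb0 (by positivity)
          apply mul_le_mul _ ha1 ha0 (by positivity)
          exact mul_le_mul_of_nonneg_left hp hs
      _ = 2^(p+q) * (β p q)^2 := by ring

lemma dxXi_nonneg {a b : ℝ} (ha : 0 ≤ a) (hb : 0 ≤ b) : 0 ≤ dxXi β a b := by
  apply tsum_nonneg
  intro pq
  have := sq_nonneg (β pq.1 pq.2)
  positivity

lemma dxXi_le (hK : Summable fun pq : ℕ × ℕ => (2:ℝ)^(pq.1+pq.2) * (β pq.1 pq.2)^2)
    {a b : ℝ} (ha : a ∈ Icc (0:ℝ) (1/2)) (hb : b ∈ Icc (0:ℝ) 1) :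
    dxXi β a b ≤ xiFn β 1 1 := by
  rw [xiFn_one_one]
  apply Summable.tsum_le_tsum _ (summable_dx hK ⟨ha.1, ha.2.trans (by norm_num)⟩ hb) (summable_sq hK)
  intro pq
  obtain ⟨p, q⟩ := pq
  have h1 : a ^ (p-1) ≤ (1/2:ℝ) ^ (p-1) := pow_le_pow_left₀ ha.1 ha.2 _
  have h2 : (p:ℝ) * a ^ (p-1) ≤ 1 := by
    calc (p:ℝ) * a ^ (p-1) ≤ (p:ℝ) * (1/2:ℝ)^(p-1) :=
          mul_le_mul_of_nonneg_left h1 (Nat.cast_nonneg p)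
      _ ≤ 1 := coeff2 p
  have hb1 : b ^ q ≤ 1 := pow_le_one₀ hb.1 hb.2
  have hb0 : (0:ℝ) ≤ b ^ q := pow_nonneg hb.1 _
  have hs : (0:ℝ) ≤ (β p q)^2 := sq_nonneg _
  have h0 : (0:ℝ) ≤ (p:ℝ) * a ^ (p-1) := mul_nonneg (Nat.cast_nonneg p) (pow_nonneg ha.1 _)
  calc (β p q)^2 * p * a^(p-1) * b^q = (β p q)^2 * ((p:ℝ) * a^(p-1)) * b^q := by ring
    _ ≤ (β p q)^2 * 1 * 1 := by
        apply mul_le_mul _ hb1 hb0 (mul_nonneg hs zero_le_one)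
        exact mul_le_mul_of_nonneg_left h2 hs
    _ = (β p q)^2 := by ring

lemma dxXi_mul_le (hK : Summable fun pq : ℕ × ℕ => (2:ℝ)^(pq.1+pq.2) * (β pq.1 pq.2)^2)
    {a b : ℝ} (ha : a ∈ Icc (0:ℝ) 1) (hb : b ∈ Icc (0:ℝ) 1) :
    dxXi β a b * (1-a)^2 ≤ xiFn β 1 1 := by
  rw [xiFn_one_one]
  have e : dxXi β a b * (1-a)^2
      = ∑' pq : ℕ × ℕ, (β pq.1 pq.2)^2 * pq.1 * a^(pq.1-1) * b^pq.2 * (1-a)^2 := by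
    rw [dxXi, tsum_mul_right]
  rw [e]
  apply Summable.tsum_le_tsum _ ((summable_dx hK ha hb).mul_right _) (summable_sq hK)
  intro pq
  obtain ⟨p, q⟩ := pq
  have h2 : (p:ℝ) * a ^ (p-1) * (1-a)^2 ≤ 1 := pow_deriv_sq_le a ha.1 ha.2 p
  have hb1 : b ^ q ≤ 1 := pow_le_one₀ hb.1 hb.2
  have hb0 : (0:ℝ) ≤ b ^ q := pow_nonneg hb.1 _
  have hs : (0:ℝ) ≤ (β p q)^2 := sq_nonneg _
  have h0 : (0:ℝ) ≤ (p:ℝ) * a ^ (p-1) * (1-a)^2 :=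
    mul_nonneg (mul_nonneg (Nat.cast_nonneg p) (pow_nonneg ha.1 _)) (sq_nonneg _)
  calc (β p q)^2 * p * a^(p-1) * b^q * (1-a)^2
      = ((p:ℝ) * a^(p-1) * (1-a)^2) * (b^q) * (β p q)^2 := by ring
    _ ≤ 1 * 1 * (β p q)^2 := by
        apply mul_le_mul_of_nonneg_right _ hs
        exact mul_le_mul h2 hb1 hb0 (by norm_num)
    _ = (β p q)^2 := by ring

lemma dxXi_lip (hK : Summable fun pq : ℕ × ℕ => (2:ℝ)^(pq.1+pq.2) * (β pq.1 pq.2)^2)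
    {a b a' b' : ℝ} (ha : a ∈ Icc (0:ℝ) (1/2)) (hb : b ∈ Icc (0:ℝ) (1/2))
    (ha' : a' ∈ Icc (0:ℝ) (1/2)) (hb' : b' ∈ Icc (0:ℝ) (1/2)) :
    |dxXi β a b - dxXi β a' b'| ≤ xiFn β 1 1 * (4 * |a - a'| + |b - b'|) := by
  have hsub : ∀ x : ℝ, x ∈ Icc (0:ℝ) (1/2) → x ∈ Icc (0:ℝ) 1 :=
    fun x hx => ⟨hx.1, hx.2.trans (by norm_num)⟩
  set f := fun pq : ℕ × ℕ => (β pq.1 pq.2)^2 * pq.1 * a^(pq.1-1) * b^pq.2 with hf_def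
  set g := fun pq : ℕ × ℕ => (β pq.1 pq.2)^2 * pq.1 * a'^(pq.1-1) * b'^pq.2 with hg_def
  have hf : Summable f := summable_dx hK (hsub a ha) (hsub b hb)
  have hg : Summable g := summable_dx hK (hsub a' ha') (hsub b' hb')
  have key : ∀ pq : ℕ × ℕ, |f pq - g pq| ≤ (β pq.1 pq.2)^2 * (4 * |a - a'| + |b - b'|) := by
    intro ⟨p, q⟩
    have hlipa : |a^(p-1) - a'^(p-1)| ≤ ((p-1:ℕ):ℝ) * (1/2:ℝ)^(p-1-1) * |a - a'| :=
      pow_lip a a' ha ha' (p-1)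
    have hlipb : |b^q - b'^q| ≤ (q:ℝ) * (1/2:ℝ)^(q-1) * |b - b'| :=
      pow_lip b b' hb hb' q
    have hbq : |b ^ q| ≤ 1 := by
      rw [abs_of_nonneg (pow_nonneg hb.1 q)]
      exact pow_le_one₀ hb.1 (hb.2.trans (by norm_num))
    have hap : |a' ^ (p-1)| ≤ (1/2:ℝ)^(p-1) := by
      rw [abs_of_nonneg (pow_nonneg ha'.1 _)]
      exact pow_le_pow_left₀ ha'.1 ha'.2 _
    have hX : |a^(p-1) * b^q - a'^(p-1) * b'^q|
        ≤ |a^(p-1) - a'^(p-1)| + (1/2:ℝ)^(p-1) * |b^q - b'^q| := by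
      have e : a^(p-1) * b^q - a'^(p-1) * b'^q
          = (a^(p-1) - a'^(p-1)) * b^q + a'^(p-1) * (b^q - b'^q) := by ring
      rw [e]
      refine (abs_add_le _ _).trans ?_
      rw [abs_mul, abs_mul]
      have t1 : |a^(p-1) - a'^(p-1)| * |b^q| ≤ |a^(p-1) - a'^(p-1)| * 1 :=
        mul_le_mul_of_nonneg_left hbq (abs_nonneg _)
      have t2 : |a'^(p-1)| * |b^q - b'^q| ≤ (1/2:ℝ)^(p-1) * |b^q - b'^q| :=
        mul_le_mul_of_nonneg_right hap (abs_nonneg _)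
      linarith
    have c1 : (p:ℝ) * |a^(p-1) - a'^(p-1)| ≤ 4 * |a - a'| := by
      calc (p:ℝ) * |a^(p-1) - a'^(p-1)|
          ≤ (p:ℝ) * (((p-1:ℕ):ℝ) * (1/2:ℝ)^(p-1-1) * |a - a'|) :=
            mul_le_mul_of_nonneg_left hlipa (Nat.cast_nonneg p)
        _ = ((p:ℝ) * ((p-1:ℕ):ℝ) * (1/2:ℝ)^(p-1-1)) * |a - a'| := by ring
        _ ≤ 4 * |a - a'| := by
            apply mul_le_mul_of_nonneg_right _ (abs_nonneg _)
            have : p - 1 - 1 = p - 2 := by omega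
            rw [this]
            exact coeff1 p
    have c2 : (p:ℝ) * ((1/2:ℝ)^(p-1) * |b^q - b'^q|) ≤ |b - b'| := by
      have hp2 : (0:ℝ) ≤ (1/2:ℝ)^(p-1) := by positivity
      calc (p:ℝ) * ((1/2:ℝ)^(p-1) * |b^q - b'^q|)
          ≤ (p:ℝ) * ((1/2:ℝ)^(p-1) * ((q:ℝ) * (1/2:ℝ)^(q-1) * |b - b'|)) := by
            apply mul_le_mul_of_nonneg_left _ (Nat.cast_nonneg p)
            exact mul_le_mul_of_nonneg_left hlipb hp2
        _ = ((p:ℝ) * (1/2:ℝ)^(p-1)) * ((q:ℝ) * (1/2:ℝ)^(q-1)) * |b - b'| := by ring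
        _ ≤ 1 * 1 * |b - b'| := by
            apply mul_le_mul_of_nonneg_right _ (abs_nonneg _)
            apply mul_le_mul (coeff2 p) (coeff2 q) (by positivity) (by norm_num)
        _ = |b - b'| := by ring
    have e2 : f (p, q) - g (p, q) = ((β p q)^2 * (p:ℝ)) * (a^(p-1) * b^q - a'^(p-1) * b'^q) := by
      simp only [hf_def, hg_def]
      ring
    have hs : (0:ℝ) ≤ (β p q)^2 := sq_nonneg _
    calc |f (p, q) - g (p, q)| = (β p q)^2 * ((p:ℝ) * |a^(p-1) * b^q - a'^(p-1) * b'^q|) := by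
          rw [e2, abs_mul, abs_of_nonneg (by positivity : (0:ℝ) ≤ (β p q)^2 * (p:ℝ))]
          ring
      _ ≤ (β p q)^2 * (4 * |a - a'| + |b - b'|) := by
          apply mul_le_mul_of_nonneg_left _ hs
          calc (p:ℝ) * |a^(p-1) * b^q - a'^(p-1) * b'^q|
              ≤ (p:ℝ) * (|a^(p-1) - a'^(p-1)| + (1/2:ℝ)^(p-1) * |b^q - b'^q|) :=
                mul_le_mul_of_nonneg_left hX (Nat.cast_nonneg p)
            _ = (p:ℝ) * |a^(p-1) - a'^(p-1)| + (p:ℝ) * ((1/2:ℝ)^(p-1) * |b^q - b'^q|) := by ring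
            _ ≤ 4 * |a - a'| + |b - b'| := add_le_add c1 c2
  have hBnd : Summable fun pq : ℕ × ℕ => (β pq.1 pq.2)^2 * (4 * |a - a'| + |b - b'|) :=
    (summable_sq hK).mul_right _
  have habs : Summable fun pq : ℕ × ℕ => |f pq - g pq| := by
    apply Summable.of_nonneg_of_le (fun pq => abs_nonneg _) key hBnd
  have e3 : dxXi β a b - dxXi β a' b' = ∑' pq : ℕ × ℕ, (f pq - g pq) :=
    (Summable.tsum_sub hf hg).symm
  rw [e3]
  have hsum2 : Summable (fun pq : ℕ × ℕ => f pq - g pq) := hf.sub hg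
  calc |∑' pq : ℕ × ℕ, (f pq - g pq)| ≤ ∑' pq : ℕ × ℕ, |f pq - g pq| := by
        rw [abs_le]
        constructor
        · rw [← tsum_neg]
          exact Summable.tsum_le_tsum (fun pq => neg_abs_le _) habs.neg hsum2
        · exact Summable.tsum_le_tsum (fun pq => le_abs_self _) hsum2 habs
    _ ≤ ∑' pq : ℕ × ℕ, (β pq.1 pq.2)^2 * (4 * |a - a'| + |b - b'|) :=
        Summable.tsum_le_tsum key habs hBnd
    _ = (∑' pq : ℕ × ℕ, (β pq.1 pq.2)^2) * (4 * |a - a'| + |b - b'|) := tsum_mul_right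
    _ = xiFn β 1 1 * (4 * |a - a'| + |b - b'|) := by rw [xiFn_one_one]

end

section
variable {β : ℕ → ℕ → ℝ}

lemma dy_swap (a b : ℝ) : dyXi β a b = dxXi (fun p q => β q p) b a := by
  rw [dyXi, dxXi]
  refine Eq.trans (tsum_congr ?_)
    ((Equiv.prodComm ℕ ℕ).tsum_eq
      (fun pq : ℕ × ℕ => (β pq.2 pq.1) ^ 2 * pq.1 * b ^ (pq.1 - 1) * a ^ pq.2))
  intro pq
  simp only [Equiv.prodComm_apply, Prod.snd_swap, Prod.fst_swap]
  ring

lemma xiFn_swap : xiFn (fun p q => β q p) 1 1 = xiFn β 1 1 := by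
  rw [xiFn, xiFn]
  refine Eq.trans (tsum_congr ?_)
    ((Equiv.prodComm ℕ ℕ).tsum_eq
      (fun pq : ℕ × ℕ => (β pq.1 pq.2) ^ 2 * (1:ℝ) ^ pq.1 * (1:ℝ) ^ pq.2))
  intro pq
  simp

lemma hK_swap (hK : Summable fun pq : ℕ × ℕ => (2:ℝ)^(pq.1+pq.2) * (β pq.1 pq.2)^2) :
    Summable fun pq : ℕ × ℕ => (2:ℝ)^(pq.1+pq.2) * ((fun p q => β q p) pq.1 pq.2)^2 := by
  have hK' : Summable (fun pq : ℕ × ℕ => (2:ℝ)^(pq.2+pq.1) * (β pq.1 pq.2)^2) := by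
    simpa [add_comm] using hK
  exact ((Equiv.prodComm ℕ ℕ).summable_iff).mpr hK'

end

/-- one component of the contraction estimate -/
lemma component_contr {Φ Φ' x x' m : ℝ}
    (hd : |Φ - Φ'| ≤ m/20) (hΦ'0 : 0 ≤ Φ') (hΦ'm : Φ' ≤ 1/50)
    (hx0 : 0 ≤ x) (hx2 : x ≤ 1/2) (hx'0 : 0 ≤ x') (hx'2 : x' ≤ 1/2)
    (hxm : |x - x'| ≤ m) (hm : 0 ≤ m) :
    |Φ*(1-x)^2 - Φ'*(1-x')^2| ≤ (1/2)*m := by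
  have e : Φ*(1-x)^2 - Φ'*(1-x')^2 = (Φ - Φ')*(1-x)^2 + Φ'*((1-x)^2-(1-x')^2) := by ring
  rw [e]
  refine (abs_add_le _ _).trans ?_
  rw [abs_mul, abs_mul, abs_of_nonneg (sq_nonneg (1-x)), abs_of_nonneg hΦ'0]
  have h1 : (1-x)^2 ≤ 1 := by nlinarith
  have h2 : |(1-x)^2 - (1-x')^2| ≤ 2*m := by
    have e2 : (1-x)^2-(1-x')^2 = (x'-x)*(2-x-x') := by ring
    rw [e2, abs_mul]
    have h3 : |2-x-x'| ≤ 2 := by rw [abs_le]; constructor <;> nlinarith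
    have hxx : |x'-x| = |x-x'| := abs_sub_comm _ _
    calc |x'-x| * |2-x-x'| ≤ m*2 := by
          rw [hxx]; exact mul_le_mul hxm h3 (abs_nonneg _) hm
      _ = 2*m := by ring
  have t1 : |Φ-Φ'| * (1-x)^2 ≤ m/20 := by nlinarith [abs_nonneg (Φ-Φ'), sq_nonneg (1-x)]
  have t2 : Φ' * |(1-x)^2-(1-x')^2| ≤ (1/50)*(2*m) :=
    mul_le_mul hΦ'm h2 (abs_nonneg _) (by norm_num)
  linarith

/-- difference of the Φ functions -/
lemma phi_diff_bound {X X' γ c S m : ℝ} (hγ0 : 0 < γ) (hcγ : c ≤ γ) (hc0 : 0 < c)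
    (hS0 : 0 ≤ S) (hSM : S ≤ c/100) (hm : 0 ≤ m) (hd : |X - X'| ≤ S*(5*m)) (h₁ : ℝ) :
    |(h₁^2 + X/γ) - (h₁^2 + X'/γ)| ≤ m/20 := by
  have e : (h₁^2 + X/γ) - (h₁^2 + X'/γ) = (X - X')/γ := by ring
  rw [e, abs_div, abs_of_pos hγ0, div_le_iff₀ hγ0]
  nlinarith [mul_nonneg hm (by linarith : (0:ℝ) ≤ γ - c),
    mul_nonneg (by linarith : (0:ℝ) ≤ c/100 - S) hm]

/-- a priori bound: approximate solutions are ≤ 1/2 -/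
lemma apriori {Φ b ε : ℝ} (hb0 : 0 ≤ b) (hb1 : b < 1) (hε : 0 ≤ ε) (hεM : ε ≤ 1/200)
    (hbound : Φ * (1-b)^2 ≤ 1/50) (happ : |Φ - b/(1-b)^2| ≤ ε) : b ≤ 1/2 := by
  have h1b : 0 < 1 - b := by linarith
  have hid : b = (b/(1-b)^2) * (1-b)^2 := by field_simp
  have h2 := (abs_le.1 happ).1
  have h3 : b ≤ (Φ + ε) * (1-b)^2 := by
    calc b = (b/(1-b)^2) * (1-b)^2 := hid
      _ ≤ (Φ + ε) * (1-b)^2 := by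
          apply mul_le_mul_of_nonneg_right _ (sq_nonneg _)
          linarith
  have h4 : (1-b)^2 ≤ 1 := by nlinarith
  nlinarith [mul_nonneg hε (sq_nonneg (1-b))]

/-- approximate equation transported to fixed-point form -/
lemma approx_psi {Φ x ε : ℝ} (hx0 : 0 ≤ x) (hx1 : x < 1) (happ : |Φ - x/(1-x)^2| ≤ ε) :
    |Φ*(1-x)^2 - x| ≤ ε := by
  have h1x : 0 < 1 - x := by linarith
  have hne : ((1-x)^2 : ℝ) ≠ 0 := by positivity
  have e : Φ*(1-x)^2 - x = (Φ - x/(1-x)^2)*(1-x)^2 := by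
    field_simp
  rw [e, abs_mul, abs_of_nonneg (sq_nonneg (1-x))]
  have h2 : (1-x)^2 ≤ 1 := by nlinarith
  calc |Φ - x/(1-x)^2| * (1-x)^2 ≤ ε*1 :=
        mul_le_mul happ h2 (sq_nonneg _) (le_trans (abs_nonneg _) happ)
    _ = ε := by ring

set_option maxHeartbeats 1000000 in
/-- stability of the fixed point equations: for `ξ(1,1), |h₁|, |h₂|` small,
if `(a,b) ∈ [0,1)²` solves the critical point system up to an error `ε ≤ ε₀`, then
`|a−a₀| ≤ Lε` and `|b−b₀| ≤ Lε`, where `(a₀,b₀)` is the unique solution in `[0,1)²` of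
`h₁² + ∂ₓξ(a₀,b₀)/γ = a₀/(1−a₀)²`, `h₂² + ∂_yξ(a₀,b₀)/(1−γ) = b₀/(1−b₀)²`. -/
theorem stmt4 (γ : ℝ) (hγ : γ ∈ Ioo (0:ℝ) 1) :
    ∃ M₀ ε₀ L : ℝ, 0 < M₀ ∧ 0 < ε₀ ∧ 0 < L ∧
      ∀ (h₁ h₂ : ℝ) (β : ℕ → ℕ → ℝ),
        (∀ p q, 0 ≤ β p q) → (∀ p q, p = 0 ∨ q = 0 → β p q = 0) →
        (∃ p q, β p q ≠ 0) →
        Summable (fun pq : ℕ × ℕ => (2 : ℝ) ^ (pq.1 + pq.2) * (β pq.1 pq.2) ^ 2) →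
        xiFn β 1 1 < M₀ → |h₁| < M₀ → |h₂| < M₀ →
          ∃ a₀ b₀ : ℝ, (a₀, b₀) ∈ Ico (0:ℝ) 1 ×ˢ Ico (0:ℝ) 1
            ∧ h₁ ^ 2 + dxXi β a₀ b₀ / γ = a₀ / (1 - a₀) ^ 2
            ∧ h₂ ^ 2 + dyXi β a₀ b₀ / (1 - γ) = b₀ / (1 - b₀) ^ 2
            ∧ (∀ a b : ℝ, (a, b) ∈ Ico (0:ℝ) 1 ×ˢ Ico (0:ℝ) 1 →
                h₁ ^ 2 + dxXi β a b / γ = a / (1 - a) ^ 2 →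
                h₂ ^ 2 + dyXi β a b / (1 - γ) = b / (1 - b) ^ 2 → a = a₀ ∧ b = b₀)
            ∧ ∀ a b ε : ℝ, (a, b) ∈ Ico (0:ℝ) 1 ×ˢ Ico (0:ℝ) 1 → 0 ≤ ε → ε ≤ ε₀ →
                |h₁ ^ 2 + dxXi β a b / γ - a / (1 - a) ^ 2| ≤ ε →
                |h₂ ^ 2 + dyXi β a b / (1 - γ) - b / (1 - b) ^ 2| ≤ ε →
                |a - a₀| ≤ L * ε ∧ |b - b₀| ≤ L * ε := by
  obtain ⟨hγ0, hγ1⟩ := hγ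
  have hγ1' : 0 < 1 - γ := by linarith
  obtain ⟨c, hc_def⟩ : ∃ c : ℝ, c = min γ (1-γ) := ⟨_, rfl⟩
  have hc0 : 0 < c := hc_def ▸ lt_min hγ0 hγ1'
  have hcγ : c ≤ γ := hc_def ▸ min_le_left _ _
  have hcγ' : c ≤ 1-γ := hc_def ▸ min_le_right _ _
  have hc2 : c ≤ 1/2 := by
    rcases le_total γ (1-γ) with h | h
    · calc c ≤ γ := hcγ
        _ ≤ 1/2 := by linarith
    · calc c ≤ 1-γ := hcγ'
        _ ≤ 1/2 := by linarith
  refine ⟨c/100, c/100, 2, by linarith, by linarith, by norm_num, ?_⟩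
  intro h₁ h₂ β hβ0 hβz hβne hK hξ hh1 hh2
  have hS0 : 0 ≤ xiFn β 1 1 := xiFn_nonneg
  have hSM : xiFn β 1 1 ≤ c/100 := le_of_lt hξ
  have hM2 : c/100 ≤ 1/200 := by linarith
  have hh1sq : h₁^2 ≤ (1/200)^2 := by
    have := abs_nonneg h₁
    nlinarith [sq_abs h₁]
  have hh2sq : h₂^2 ≤ (1/200)^2 := by
    have := abs_nonneg h₂
    nlinarith [sq_abs h₂]
  have hcne : c ≠ 0 := ne_of_gt hc0
  have hdivc : (c/100)/c = 1/100 := by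
    field_simp
  -- bounds for the Φ functions on [0,1/2]²
  have hΦ₁mem : ∀ a b : ℝ, a ∈ Icc (0:ℝ) (1/2) → b ∈ Icc (0:ℝ) (1/2) →
      0 ≤ h₁^2 + dxXi β a b / γ ∧ h₁^2 + dxXi β a b / γ ≤ 1/50 := by
    intro a b ha hb
    have hd0 : 0 ≤ dxXi β a b := dxXi_nonneg ha.1 hb.1
    constructor
    · have : 0 ≤ dxXi β a b / γ := div_nonneg hd0 hγ0.le
      nlinarith [sq_nonneg h₁]
    · have h1 : dxXi β a b ≤ c/100 :=
        le_trans (dxXi_le hK ha ⟨hb.1, hb.2.trans (by norm_num)⟩) hSM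
      have h2 : dxXi β a b / γ ≤ (c/100)/c := div_le_div₀ (by linarith) h1 hc0 hcγ
      rw [hdivc] at h2
      nlinarith
  have hΦ₂mem : ∀ a b : ℝ, a ∈ Icc (0:ℝ) (1/2) → b ∈ Icc (0:ℝ) (1/2) →
      0 ≤ h₂^2 + dyXi β a b / (1-γ) ∧ h₂^2 + dyXi β a b / (1-γ) ≤ 1/50 := by
    intro a b ha hb
    have hd0 : 0 ≤ dyXi β a b := by
      rw [dy_swap]; exact dxXi_nonneg hb.1 ha.1
    constructor
    · have : 0 ≤ dyXi β a b / (1-γ) := div_nonneg hd0 hγ1'.le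
      nlinarith [sq_nonneg h₂]
    · have h1 : dyXi β a b ≤ c/100 := by
        rw [dy_swap]
        calc dxXi (fun p q => β q p) b a ≤ xiFn (fun p q => β q p) 1 1 :=
              dxXi_le (β := fun p q => β q p) (hK_swap hK) hb ⟨ha.1, ha.2.trans (by norm_num)⟩
          _ = xiFn β 1 1 := xiFn_swap
          _ ≤ c/100 := hSM
      have h2 : dyXi β a b / (1-γ) ≤ (c/100)/c := div_le_div₀ (by linarith) h1 hc0 hcγ'
      rw [hdivc] at h2
      nlinarith
  -- contraction estimates for the two components
  have comp1 : ∀ a b a' b' : ℝ, a ∈ Icc (0:ℝ) (1/2) → b ∈ Icc (0:ℝ) (1/2) →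
      a' ∈ Icc (0:ℝ) (1/2) → b' ∈ Icc (0:ℝ) (1/2) →
      |(h₁^2 + dxXi β a b/γ)*(1-a)^2 - (h₁^2 + dxXi β a' b'/γ)*(1-a')^2|
        ≤ (1/2) * max |a-a'| |b-b'| := by
    intro a b a' b' ha hb ha' hb'
    set m := max |a-a'| |b-b'| with hm_def
    have hm1 : |a-a'| ≤ m := le_max_left _ _
    have hm2 : |b-b'| ≤ m := le_max_right _ _
    have hm0 : 0 ≤ m := le_trans (abs_nonneg _) hm1
    have hlip : |dxXi β a b - dxXi β a' b'| ≤ xiFn β 1 1 * (5*m) := by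
      calc |dxXi β a b - dxXi β a' b'| ≤ xiFn β 1 1 * (4*|a-a'| + |b-b'|) :=
            dxXi_lip hK ha hb ha' hb'
        _ ≤ xiFn β 1 1 * (5*m) := by nlinarith
    have hd : |(h₁^2 + dxXi β a b/γ) - (h₁^2 + dxXi β a' b'/γ)| ≤ m/20 :=
      phi_diff_bound hγ0 hcγ hc0 hS0 hSM hm0 hlip h₁
    exact component_contr hd (hΦ₁mem a' b' ha' hb').1 (hΦ₁mem a' b' ha' hb').2
      ha.1 ha.2 ha'.1 ha'.2 hm1 hm0
  have comp2 : ∀ a b a' b' : ℝ, a ∈ Icc (0:ℝ) (1/2) → b ∈ Icc (0:ℝ) (1/2) →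
      a' ∈ Icc (0:ℝ) (1/2) → b' ∈ Icc (0:ℝ) (1/2) →
      |(h₂^2 + dyXi β a b/(1-γ))*(1-b)^2 - (h₂^2 + dyXi β a' b'/(1-γ))*(1-b')^2|
        ≤ (1/2) * max |a-a'| |b-b'| := by
    intro a b a' b' ha hb ha' hb'
    set m := max |a-a'| |b-b'| with hm_def
    have hm1 : |a-a'| ≤ m := le_max_left _ _
    have hm2 : |b-b'| ≤ m := le_max_right _ _
    have hm0 : 0 ≤ m := le_trans (abs_nonneg _) hm1
    have hlip : |dyXi β a b - dyXi β a' b'| ≤ xiFn β 1 1 * (5*m) := by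
      rw [dy_swap (β := β) a b, dy_swap (β := β) a' b']
      calc |dxXi (fun p q => β q p) b a - dxXi (fun p q => β q p) b' a'|
          ≤ xiFn (fun p q => β q p) 1 1 * (4*|b-b'| + |a-a'|) :=
            dxXi_lip (β := fun p q => β q p) (hK_swap hK) hb ha hb' ha'
        _ = xiFn β 1 1 * (4*|b-b'| + |a-a'|) := by rw [xiFn_swap]
        _ ≤ xiFn β 1 1 * (5*m) := by nlinarith
    have hd : |(h₂^2 + dyXi β a b/(1-γ)) - (h₂^2 + dyXi β a' b'/(1-γ))| ≤ m/20 :=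
      phi_diff_bound hγ1' hcγ' hc0 hS0 hSM hm0 hlip h₂
    exact component_contr hd (hΦ₂mem a' b' ha' hb').1 (hΦ₂mem a' b' ha' hb').2
      hb.1 hb.2 hb'.1 hb'.2 hm2 hm0
  -- a priori bounds for approximate solutions
  have apriori1 : ∀ a b ε : ℝ, 0 ≤ a → a < 1 → 0 ≤ b → b < 1 → 0 ≤ ε → ε ≤ c/100 →
      |h₁ ^ 2 + dxXi β a b / γ - a / (1 - a) ^ 2| ≤ ε → a ≤ 1/2 := by
    intro a b ε ha0 ha1 hb0 hb1 hε hεM happ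
    apply apriori ha0 ha1 hε (hεM.trans hM2) _ happ
    have e : (h₁^2 + dxXi β a b/γ)*(1-a)^2 = h₁^2*(1-a)^2 + (dxXi β a b*(1-a)^2)/γ := by
      ring
    rw [e]
    have h1 : dxXi β a b * (1-a)^2 ≤ c/100 :=
      le_trans (dxXi_mul_le hK ⟨ha0, ha1.le⟩ ⟨hb0, hb1.le⟩) hSM
    have h1' : 0 ≤ dxXi β a b * (1-a)^2 :=
      mul_nonneg (dxXi_nonneg ha0 hb0) (sq_nonneg _)
    have h2 : (dxXi β a b*(1-a)^2) / γ ≤ (c/100)/c := div_le_div₀ (by linarith) h1 hc0 hcγ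
    rw [hdivc] at h2
    have h3 : (1-a)^2 ≤ 1 := by nlinarith
    nlinarith [sq_nonneg h₁, mul_nonneg (sq_nonneg h₁) (sq_nonneg (1-a))]
  have apriori2 : ∀ a b ε : ℝ, 0 ≤ a → a < 1 → 0 ≤ b → b < 1 → 0 ≤ ε → ε ≤ c/100 →
      |h₂ ^ 2 + dyXi β a b / (1-γ) - b / (1 - b) ^ 2| ≤ ε → b ≤ 1/2 := by
    intro a b ε ha0 ha1 hb0 hb1 hε hεM happ
    apply apriori hb0 hb1 hε (hεM.trans hM2) _ happ
    have e : (h₂^2 + dyXi β a b/(1-γ))*(1-b)^2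
        = h₂^2*(1-b)^2 + (dyXi β a b*(1-b)^2)/(1-γ) := by ring
    rw [e]
    have h1 : dyXi β a b * (1-b)^2 ≤ c/100 := by
      rw [dy_swap]
      calc dxXi (fun p q => β q p) b a * (1-b)^2 ≤ xiFn (fun p q => β q p) 1 1 :=
            dxXi_mul_le (β := fun p q => β q p) (hK_swap hK) ⟨hb0, hb1.le⟩ ⟨ha0, ha1.le⟩
        _ = xiFn β 1 1 := xiFn_swap
        _ ≤ c/100 := hSM
    have h1' : 0 ≤ dyXi β a b * (1-b)^2 := by
      rw [dy_swap]
      exact mul_nonneg (dxXi_nonneg hb0 ha0) (sq_nonneg _)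
    have h2 : (dyXi β a b*(1-b)^2) / (1-γ) ≤ (c/100)/c :=
      div_le_div₀ (by linarith) h1 hc0 hcγ'
    rw [hdivc] at h2
    have h3 : (1-b)^2 ≤ 1 := by nlinarith
    nlinarith [sq_nonneg h₂, mul_nonneg (sq_nonneg h₂) (sq_nonneg (1-b))]
  -- Banach fixed point on D = [0,1/2]²
  set D : Set (ℝ×ℝ) := (Icc (0:ℝ) (1/2)) ×ˢ (Icc (0:ℝ) (1/2)) with hD_def
  have hDclosed : IsClosed D := IsClosed.prod isClosed_Icc isClosed_Icc
  haveI : CompleteSpace D := hDclosed.completeSpace_coe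
  haveI : Nonempty D := ⟨⟨(0,0), by
    constructor <;> constructor <;> norm_num⟩⟩
  set T : D → D := fun x =>
    ⟨((h₁^2 + dxXi β x.1.1 x.1.2/γ) * (1 - x.1.1)^2,
      (h₂^2 + dyXi β x.1.1 x.1.2/(1-γ)) * (1 - x.1.2)^2), by
      obtain ⟨hx1, hx2⟩ := x.2
      constructor
      · constructor
        · exact mul_nonneg (hΦ₁mem _ _ hx1 hx2).1 (sq_nonneg _)
        · have := (hΦ₁mem _ _ hx1 hx2).2
          have h3 : (1 - x.1.1)^2 ≤ 1 := by
            obtain ⟨u, v⟩ := hx1; nlinarith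
          nlinarith [(hΦ₁mem _ _ hx1 hx2).1]
      · constructor
        · exact mul_nonneg (hΦ₂mem _ _ hx1 hx2).1 (sq_nonneg _)
        · have := (hΦ₂mem _ _ hx1 hx2).2
          have h3 : (1 - x.1.2)^2 ≤ 1 := by
            obtain ⟨u, v⟩ := hx2; nlinarith
          nlinarith [(hΦ₂mem _ _ hx1 hx2).1]⟩ with hT_def
  have hT : ContractingWith (1/2 : NNReal) T := by
    constructor
    · rw [← NNReal.coe_lt_coe]; norm_num
    · apply LipschitzWith.of_dist_le_mul
      intro x y
      obtain ⟨hx1, hx2⟩ := x.2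
      obtain ⟨hy1, hy2⟩ := y.2
      have hcoe : ((1/2 : NNReal) : ℝ) = 1/2 := by norm_num
      rw [Subtype.dist_eq, Subtype.dist_eq, Prod.dist_eq, Prod.dist_eq, hcoe]
      simp only [Real.dist_eq]
      have e1 := comp1 x.1.1 x.1.2 y.1.1 y.1.2 hx1 hx2 hy1 hy2
      have e2 := comp2 x.1.1 x.1.2 y.1.1 y.1.2 hx1 hx2 hy1 hy2
      apply max_le
      · exact le_trans e1 (by rfl)
      · exact le_trans e2 (by rfl)
  set z : D := ContractingWith.fixedPoint T hT with hz_def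
  have hz : T z = z := hT.fixedPoint_isFixedPt
  obtain ⟨ha₀, hb₀⟩ := z.2
  have hfix1 : (h₁^2 + dxXi β z.1.1 z.1.2/γ) * (1 - z.1.1)^2 = z.1.1 :=
    congrArg (fun w : D => w.1.1) hz
  have hfix2 : (h₂^2 + dyXi β z.1.1 z.1.2/(1-γ)) * (1 - z.1.2)^2 = z.1.2 :=
    congrArg (fun w : D => w.1.2) hz
  set a₀ := z.1.1
  set b₀ := z.1.2
  have ha₀1 : a₀ < 1 := lt_of_le_of_lt ha₀.2 (by norm_num)
  have hb₀1 : b₀ < 1 := lt_of_le_of_lt hb₀.2 (by norm_num)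
  have hna : ((1 - a₀)^2 : ℝ) ≠ 0 := by
    have : (0:ℝ) < 1 - a₀ := by linarith
    positivity
  have hnb : ((1 - b₀)^2 : ℝ) ≠ 0 := by
    have : (0:ℝ) < 1 - b₀ := by linarith
    positivity
  have heq1 : h₁ ^ 2 + dxXi β a₀ b₀ / γ = a₀ / (1 - a₀) ^ 2 := by
    rw [eq_div_iff hna]; exact hfix1
  have heq2 : h₂ ^ 2 + dyXi β a₀ b₀ / (1 - γ) = b₀ / (1 - b₀) ^ 2 := by
    rw [eq_div_iff hnb]; exact hfix2
  -- main stability estimate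
  have key : ∀ a b ε : ℝ, (a, b) ∈ Ico (0:ℝ) 1 ×ˢ Ico (0:ℝ) 1 → 0 ≤ ε → ε ≤ c/100 →
      |h₁ ^ 2 + dxXi β a b / γ - a / (1 - a) ^ 2| ≤ ε →
      |h₂ ^ 2 + dyXi β a b / (1 - γ) - b / (1 - b) ^ 2| ≤ ε →
      |a - a₀| ≤ 2 * ε ∧ |b - b₀| ≤ 2 * ε := by
    intro a b ε hab hε hεM happ1 happ2
    obtain ⟨⟨ha0, ha1⟩, ⟨hb0, hb1⟩⟩ := hab
    have ha2 : a ≤ 1/2 := apriori1 a b ε ha0 ha1 hb0 hb1 hε hεM happ1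
    have hb2 : b ≤ 1/2 := apriori2 a b ε ha0 ha1 hb0 hb1 hε hεM happ2
    have hpsi1 : |(h₁^2 + dxXi β a b/γ)*(1-a)^2 - a| ≤ ε := approx_psi ha0 ha1 happ1
    have hpsi2 : |(h₂^2 + dyXi β a b/(1-γ))*(1-b)^2 - b| ≤ ε := approx_psi hb0 hb1 happ2
    set m := max |a-a₀| |b-b₀| with hm_def
    have hm1 : |a-a₀| ≤ m := le_max_left _ _
    have hm2 : |b-b₀| ≤ m := le_max_right _ _
    have hc1 := comp1 a b a₀ b₀ ⟨ha0, ha2⟩ ⟨hb0, hb2⟩ ha₀ hb₀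
    have hc2 := comp2 a b a₀ b₀ ⟨ha0, ha2⟩ ⟨hb0, hb2⟩ ha₀ hb₀
    have t1 : |a - a₀| ≤ ε + (1/2)*m := by
      have e : a - a₀ = (a - (h₁^2 + dxXi β a b/γ)*(1-a)^2)
          + ((h₁^2 + dxXi β a b/γ)*(1-a)^2 - (h₁^2 + dxXi β a₀ b₀/γ)*(1-a₀)^2) := by
        rw [hfix1]; ring
      rw [e]
      refine (abs_add_le _ _).trans ?_
      rw [abs_sub_comm a _]
      exact add_le_add hpsi1 hc1
    have t2 : |b - b₀| ≤ ε + (1/2)*m := by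
      have e : b - b₀ = (b - (h₂^2 + dyXi β a b/(1-γ))*(1-b)^2)
          + ((h₂^2 + dyXi β a b/(1-γ))*(1-b)^2 - (h₂^2 + dyXi β a₀ b₀/(1-γ))*(1-b₀)^2) := by
        rw [hfix2]; ring
      rw [e]
      refine (abs_add_le _ _).trans ?_
      rw [abs_sub_comm b _]
      exact add_le_add hpsi2 hc2
    have hmle : m ≤ ε + (1/2)*m := max_le t1 t2
    have hm2ε : m ≤ 2*ε := by linarith
    exact ⟨hm1.trans hm2ε, hm2.trans hm2ε⟩
  refine ⟨a₀, b₀, ⟨⟨ha₀.1, ha₀1⟩, ⟨hb₀.1, hb₀1⟩⟩, heq1, heq2, ?_, ?_⟩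
  · -- uniqueness
    intro a b hab he1 he2
    have h0 : (0:ℝ) ≤ 0 := le_refl 0
    have happ1 : |h₁ ^ 2 + dxXi β a b / γ - a / (1 - a) ^ 2| ≤ 0 := by
      rw [he1]; simp
    have happ2 : |h₂ ^ 2 + dyXi β a b / (1 - γ) - b / (1 - b) ^ 2| ≤ 0 := by
      rw [he2]; simp
    obtain ⟨k1, k2⟩ := key a b 0 hab (le_refl 0) (by linarith) happ1 happ2
    constructor
    · have : |a - a₀| ≤ 0 := by linarith
      have := abs_eq_zero.1 (le_antisymm this (abs_nonneg _))
      linarith [sub_eq_zero.1 this]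
    · have : |b - b₀| ≤ 0 := by linarith
      have := abs_eq_zero.1 (le_antisymm this (abs_nonneg _))
      linarith [sub_eq_zero.1 this]
  · -- stability
    intro a b ε hab hε hεM happ1 happ2
    exact key a b ε hab hε hεM happ1 happ2
end

section
/- Let (Ω,μ) be a probability space and X, Y : Ω → [0,∞) be bounded measurable functions such that E[X^{2k+2}] ≤ E[Y^{2k+2}] for every integer k ≥ 0. Then for every λ ≥ 0 one has E[X² exp(λY²)] ≤ E[Y² exp(λY²)]. -/
open MeasureTheory Real

/-- If `X, Y : Ω → [0,∞)` are bounded measurable functions on a probability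
space with `E[X^(2k+2)] ≤ E[Y^(2k+2)]` for every `k ≥ 0`, then for every `λ ≥ 0`,
`E[X² exp(λ Y²)] ≤ E[Y² exp(λ Y²)]`. -/
theorem stmt7 {Ω : Type*} [MeasurableSpace Ω] (μ : Measure Ω) [IsProbabilityMeasure μ]
    (X Y : Ω → ℝ) (hXm : Measurable X) (hYm : Measurable Y)
    (hX0 : ∀ ω, 0 ≤ X ω) (hY0 : ∀ ω, 0 ≤ Y ω)
    (CX CY : ℝ) (hXb : ∀ ω, X ω ≤ CX) (hYb : ∀ ω, Y ω ≤ CY)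
    (hmom : ∀ k : ℕ, ∫ ω, X ω ^ (2 * k + 2) ∂μ ≤ ∫ ω, Y ω ^ (2 * k + 2) ∂μ) :
    ∀ lam : ℝ, 0 ≤ lam →
      ∫ ω, X ω ^ 2 * Real.exp (lam * Y ω ^ 2) ∂μ
        ≤ ∫ ω, Y ω ^ 2 * Real.exp (lam * Y ω ^ 2) ∂μ := by
  intro lam hlam
  set D : ℝ := max (max CX CY) 1 with hD
  have hD0 : (0:ℝ) ≤ D := le_trans zero_le_one (le_max_right _ _)
  have hXD : ∀ ω, X ω ≤ D := fun ω =>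
    (hXb ω).trans (le_trans (le_max_left CX CY) (le_max_left _ _))
  have hYD : ∀ ω, Y ω ≤ D := fun ω =>
    (hYb ω).trans (le_trans (le_max_right CX CY) (le_max_left _ _))
  have hlY : ∀ ω, (0:ℝ) ≤ lam * Y ω ^ 2 := fun ω => mul_nonneg hlam (sq_nonneg _)
  have hlD : (0:ℝ) ≤ lam * D ^ 2 := mul_nonneg hlam (sq_nonneg _)
  -- generic integrability from bounds
  have integ : ∀ (f : Ω → ℝ) (C : ℝ), Measurable f → (∀ ω, |f ω| ≤ C) →
      Integrable f μ := by
    intro f C hf hb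
    exact (integrable_const C).mono' hf.aestronglyMeasurable
      (Filter.Eventually.of_forall fun ω => by simpa using hb ω)
  -- integrability of powers
  have integpow : ∀ (Z : Ω → ℝ), Measurable Z → (∀ ω, 0 ≤ Z ω) → (∀ ω, Z ω ≤ D) →
      ∀ m : ℕ, Integrable (fun ω => Z ω ^ m) μ := by
    intro Z hZ h0 hb m
    refine integ _ (D ^ m) (hZ.pow_const m) fun ω => ?_
    rw [abs_of_nonneg (pow_nonneg (h0 ω) m)]
    exact pow_le_pow_left₀ (h0 ω) (hb ω) m
  -- key moment comparison via weighted AM-GM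
  have key : ∀ k : ℕ, ∫ ω, X ω ^ 2 * Y ω ^ (2 * k) ∂μ ≤ ∫ ω, Y ω ^ (2 * k + 2) ∂μ := by
    intro k
    have hk1 : (0:ℝ) < (k:ℝ) + 1 := by positivity
    have pointwise : ∀ ω, X ω ^ 2 * Y ω ^ (2 * k) ≤
        (1 / ((k:ℝ) + 1)) * X ω ^ (2 * k + 2) + ((k:ℝ) / ((k:ℝ) + 1)) * Y ω ^ (2 * k + 2) := by
      intro ω
      have hw : (1 / ((k:ℝ) + 1)) + ((k:ℝ) / ((k:ℝ) + 1)) = 1 := by field_simp; ring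
      have h := Real.geom_mean_le_arith_mean2_weighted
        (by positivity : (0:ℝ) ≤ 1 / ((k:ℝ) + 1))
        (by positivity : (0:ℝ) ≤ (k:ℝ) / ((k:ℝ) + 1))
        (pow_nonneg (hX0 ω) (2 * k + 2)) (pow_nonneg (hY0 ω) (2 * k + 2)) hw
      have e1 : (X ω ^ (2 * k + 2)) ^ (1 / ((k:ℝ) + 1)) = X ω ^ 2 := by
        rw [← Real.rpow_natCast (X ω) (2 * k + 2), ← Real.rpow_mul (hX0 ω)]
        have : ((2 * k + 2 : ℕ) : ℝ) * (1 / ((k:ℝ) + 1)) = (2:ℕ) := by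
          push_cast; field_simp
        rw [this, Real.rpow_natCast]
      have e2 : (Y ω ^ (2 * k + 2)) ^ ((k:ℝ) / ((k:ℝ) + 1)) = Y ω ^ (2 * k) := by
        rw [← Real.rpow_natCast (Y ω) (2 * k + 2), ← Real.rpow_mul (hY0 ω)]
        have : ((2 * k + 2 : ℕ) : ℝ) * ((k:ℝ) / ((k:ℝ) + 1)) = ((2 * k : ℕ) : ℝ) := by
          push_cast; field_simp
        rw [this, Real.rpow_natCast]
      rw [e1, e2] at h
      exact h
    have hiX := integpow X hXm hX0 hXD (2 * k + 2)
    have hiY := integpow Y hYm hY0 hYD (2 * k + 2)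
    have hiXY : Integrable (fun ω => X ω ^ 2 * Y ω ^ (2 * k)) μ := by
      refine integ _ (D ^ 2 * D ^ (2 * k)) ((hXm.pow_const 2).mul (hYm.pow_const (2*k)))
        fun ω => ?_
      rw [abs_of_nonneg (mul_nonneg (sq_nonneg _) (pow_nonneg (hY0 ω) _))]
      exact mul_le_mul (pow_le_pow_left₀ (hX0 ω) (hXD ω) 2)
        (pow_le_pow_left₀ (hY0 ω) (hYD ω) (2*k)) (pow_nonneg (hY0 ω) _) (sq_nonneg D)
    calc ∫ ω, X ω ^ 2 * Y ω ^ (2 * k) ∂μ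
        ≤ ∫ ω, ((1 / ((k:ℝ) + 1)) * X ω ^ (2 * k + 2)
            + ((k:ℝ) / ((k:ℝ) + 1)) * Y ω ^ (2 * k + 2)) ∂μ := by
          refine integral_mono hiXY ?_ pointwise
          exact (hiX.const_mul _).add (hiY.const_mul _)
      _ = (1 / ((k:ℝ) + 1)) * ∫ ω, X ω ^ (2 * k + 2) ∂μ
            + ((k:ℝ) / ((k:ℝ) + 1)) * ∫ ω, Y ω ^ (2 * k + 2) ∂μ := by
          rw [integral_add (hiX.const_mul _) (hiY.const_mul _),
            integral_const_mul, integral_const_mul]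
      _ ≤ (1 / ((k:ℝ) + 1)) * ∫ ω, Y ω ^ (2 * k + 2) ∂μ
            + ((k:ℝ) / ((k:ℝ) + 1)) * ∫ ω, Y ω ^ (2 * k + 2) ∂μ := by
          have h := mul_le_mul_of_nonneg_left (hmom k)
            (by positivity : (0:ℝ) ≤ 1 / ((k:ℝ) + 1))
          linarith
      _ = ∫ ω, Y ω ^ (2 * k + 2) ∂μ := by
          rw [← add_mul]
          have : (1 / ((k:ℝ) + 1)) + ((k:ℝ) / ((k:ℝ) + 1)) = 1 := by field_simp; ring
          rw [this, one_mul]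
  -- series bound function
  set b : ℕ → ℝ := fun n => D ^ 2 * ((lam * D ^ 2) ^ n / ((Nat.factorial n : ℕ) : ℝ)) with hb
  have hbsum : Summable b := (Real.summable_pow_div_factorial (lam * D ^ 2)).mul_left _
  have hb0 : ∀ n, 0 ≤ b n := fun n =>
    mul_nonneg (sq_nonneg D) (div_nonneg (pow_nonneg hlD n) (Nat.cast_nonneg _))
  -- expansion of the exponential integral
  have hexp : ∀ (Z : Ω → ℝ), Measurable Z → (∀ ω, 0 ≤ Z ω) → (∀ ω, Z ω ≤ D) →
      ∫ ω, Z ω ^ 2 * Real.exp (lam * Y ω ^ 2) ∂μ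
        = ∑' n : ℕ, ∫ ω, Z ω ^ 2 * ((lam * Y ω ^ 2) ^ n / ((Nat.factorial n : ℕ) : ℝ)) ∂μ := by
    intro Z hZ h0 hDb
    have hfb : ∀ (n : ℕ) (ω : Ω), 0 ≤ Z ω ^ 2 * ((lam * Y ω ^ 2) ^ n / ((Nat.factorial n : ℕ) : ℝ)) := by
      intro n ω
      exact mul_nonneg (sq_nonneg _) (div_nonneg (pow_nonneg (hlY ω) n) (Nat.cast_nonneg _))
    have hfub : ∀ (n : ℕ) (ω : Ω), Z ω ^ 2 * ((lam * Y ω ^ 2) ^ n / ((Nat.factorial n : ℕ) : ℝ)) ≤ b n := by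
      intro n ω
      have h1 : Z ω ^ 2 ≤ D ^ 2 := pow_le_pow_left₀ (h0 ω) (hDb ω) 2
      have h2 : (lam * Y ω ^ 2) ^ n ≤ (lam * D ^ 2) ^ n := by
        refine pow_le_pow_left₀ (hlY ω) ?_ n
        exact mul_le_mul_of_nonneg_left (pow_le_pow_left₀ (hY0 ω) (hYD ω) 2) hlam
      have h3 : (lam * Y ω ^ 2) ^ n / ((Nat.factorial n : ℕ) : ℝ) ≤ (lam * D ^ 2) ^ n / ((Nat.factorial n : ℕ) : ℝ) := by
        exact div_le_div_of_nonneg_right h2 (by exact_mod_cast (Nat.factorial_pos n).le)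
      calc Z ω ^ 2 * ((lam * Y ω ^ 2) ^ n / ((Nat.factorial n : ℕ) : ℝ))
          ≤ D ^ 2 * ((lam * D ^ 2) ^ n / ((Nat.factorial n : ℕ) : ℝ)) := by
            refine mul_le_mul h1 h3
              (div_nonneg (pow_nonneg (hlY ω) n) (Nat.cast_nonneg _)) (sq_nonneg D)
        _ = b n := rfl
    have hmeas : ∀ n : ℕ, AEStronglyMeasurable
        (fun ω => Z ω ^ 2 * ((lam * Y ω ^ 2) ^ n / ((Nat.factorial n : ℕ) : ℝ))) μ := by
      intro n
      exact ((hZ.pow_const 2).mul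
        ((((measurable_const.mul (hYm.pow_const 2)).pow_const n)).div_const _)).aestronglyMeasurable
    have hlint : ∑' n : ℕ, ∫⁻ ω, ‖Z ω ^ 2 * ((lam * Y ω ^ 2) ^ n / ((Nat.factorial n : ℕ) : ℝ))‖₊ ∂μ ≠ ⊤ := by
      have hle : ∀ n : ℕ, ∫⁻ ω, ‖Z ω ^ 2 * ((lam * Y ω ^ 2) ^ n / ((Nat.factorial n : ℕ) : ℝ))‖₊ ∂μ
          ≤ ENNReal.ofReal (b n) := by
        intro n
        have : ∫⁻ ω, ‖Z ω ^ 2 * ((lam * Y ω ^ 2) ^ n / ((Nat.factorial n : ℕ) : ℝ))‖₊ ∂μ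
            ≤ ∫⁻ _, ENNReal.ofReal (b n) ∂μ := by
          refine lintegral_mono fun ω => ?_
          rw [← enorm_eq_nnnorm, ← ofReal_norm]
          refine ENNReal.ofReal_le_ofReal ?_
          rw [Real.norm_eq_abs, abs_of_nonneg (hfb n ω)]
          exact hfub n ω
        simpa using this
      refine ne_top_of_le_ne_top ?_ (ENNReal.tsum_le_tsum hle)
      rw [← ENNReal.ofReal_tsum_of_nonneg hb0 hbsum]
      exact ENNReal.ofReal_ne_top
    have hser : ∀ ω, Z ω ^ 2 * Real.exp (lam * Y ω ^ 2)
        = ∑' n : ℕ, Z ω ^ 2 * ((lam * Y ω ^ 2) ^ n / ((Nat.factorial n : ℕ) : ℝ)) := by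
      intro ω
      rw [tsum_mul_left]
      congr 1
      rw [Real.exp_eq_exp_ℝ, NormedSpace.exp_eq_tsum_div]
    calc ∫ ω, Z ω ^ 2 * Real.exp (lam * Y ω ^ 2) ∂μ
        = ∫ ω, ∑' n : ℕ, Z ω ^ 2 * ((lam * Y ω ^ 2) ^ n / ((Nat.factorial n : ℕ) : ℝ)) ∂μ := by
          exact integral_congr_ae (Filter.Eventually.of_forall hser)
      _ = ∑' n : ℕ, ∫ ω, Z ω ^ 2 * ((lam * Y ω ^ 2) ^ n / ((Nat.factorial n : ℕ) : ℝ)) ∂μ :=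
          integral_tsum hmeas hlint
  -- termwise comparison
  have hterm : ∀ n : ℕ, ∫ ω, X ω ^ 2 * ((lam * Y ω ^ 2) ^ n / ((Nat.factorial n : ℕ) : ℝ)) ∂μ
      ≤ ∫ ω, Y ω ^ 2 * ((lam * Y ω ^ 2) ^ n / ((Nat.factorial n : ℕ) : ℝ)) ∂μ := by
    intro n
    have eX : ∀ ω, X ω ^ 2 * ((lam * Y ω ^ 2) ^ n / ((Nat.factorial n : ℕ) : ℝ))
        = (lam ^ n / ((Nat.factorial n : ℕ) : ℝ)) * (X ω ^ 2 * Y ω ^ (2 * n)) := by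
      intro ω; rw [mul_pow, ← pow_mul]; ring
    have eY : ∀ ω, Y ω ^ 2 * ((lam * Y ω ^ 2) ^ n / ((Nat.factorial n : ℕ) : ℝ))
        = (lam ^ n / ((Nat.factorial n : ℕ) : ℝ)) * Y ω ^ (2 * n + 2) := by
      intro ω; rw [mul_pow, ← pow_mul]; ring
    calc ∫ ω, X ω ^ 2 * ((lam * Y ω ^ 2) ^ n / ((Nat.factorial n : ℕ) : ℝ)) ∂μ
        = (lam ^ n / ((Nat.factorial n : ℕ) : ℝ)) * ∫ ω, X ω ^ 2 * Y ω ^ (2 * n) ∂μ := by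
          simp_rw [eX]; rw [integral_const_mul]
      _ ≤ (lam ^ n / ((Nat.factorial n : ℕ) : ℝ)) * ∫ ω, Y ω ^ (2 * n + 2) ∂μ := by
          exact mul_le_mul_of_nonneg_left (key n) (div_nonneg (pow_nonneg hlam n) (Nat.cast_nonneg _))
      _ = ∫ ω, Y ω ^ 2 * ((lam * Y ω ^ 2) ^ n / ((Nat.factorial n : ℕ) : ℝ)) ∂μ := by
          simp_rw [eY]; rw [integral_const_mul]
  -- summability of both series
  have hsummable : ∀ (Z : Ω → ℝ), Measurable Z → (∀ ω, 0 ≤ Z ω) → (∀ ω, Z ω ≤ D) →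
      Summable (fun n : ℕ => ∫ ω, Z ω ^ 2 * ((lam * Y ω ^ 2) ^ n / ((Nat.factorial n : ℕ) : ℝ)) ∂μ) := by
    intro Z hZ h0 hDb
    refine Summable.of_nonneg_of_le (fun n => ?_) (fun n => ?_) hbsum
    · exact integral_nonneg fun ω =>
        mul_nonneg (sq_nonneg _) (div_nonneg (pow_nonneg (hlY ω) n) (Nat.cast_nonneg _))
    · have hInt : Integrable (fun ω => Z ω ^ 2 * ((lam * Y ω ^ 2) ^ n / ((Nat.factorial n : ℕ) : ℝ))) μ := by
        refine integ _ (b n) ((hZ.pow_const 2).mul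
          ((((measurable_const.mul (hYm.pow_const 2)).pow_const n)).div_const _)) fun ω => ?_
        have h1 : Z ω ^ 2 ≤ D ^ 2 := pow_le_pow_left₀ (h0 ω) (hDb ω) 2
        have h2 : (lam * Y ω ^ 2) ^ n ≤ (lam * D ^ 2) ^ n := by
          refine pow_le_pow_left₀ (hlY ω) ?_ n
          exact mul_le_mul_of_nonneg_left (pow_le_pow_left₀ (hY0 ω) (hYD ω) 2) hlam
        rw [abs_of_nonneg (mul_nonneg (sq_nonneg _)
          (div_nonneg (pow_nonneg (hlY ω) n) (Nat.cast_nonneg _)))]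
        refine mul_le_mul h1 (div_le_div_of_nonneg_right h2 (by exact_mod_cast (Nat.factorial_pos n).le))
          (div_nonneg (pow_nonneg (hlY ω) n) (Nat.cast_nonneg _)) (sq_nonneg D)
      calc ∫ ω, Z ω ^ 2 * ((lam * Y ω ^ 2) ^ n / ((Nat.factorial n : ℕ) : ℝ)) ∂μ
          ≤ ∫ _, b n ∂μ := by
            refine integral_mono hInt (integrable_const _) fun ω => ?_
            have h1 : Z ω ^ 2 ≤ D ^ 2 := pow_le_pow_left₀ (h0 ω) (hDb ω) 2
            have h2 : (lam * Y ω ^ 2) ^ n ≤ (lam * D ^ 2) ^ n := by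
              refine pow_le_pow_left₀ (hlY ω) ?_ n
              exact mul_le_mul_of_nonneg_left (pow_le_pow_left₀ (hY0 ω) (hYD ω) 2) hlam
            refine mul_le_mul h1 (div_le_div_of_nonneg_right h2 (Nat.cast_nonneg _))
              (div_nonneg (pow_nonneg (hlY ω) n) (Nat.cast_nonneg _)) (sq_nonneg D)
        _ = b n := by simp
  rw [hexp X hXm hX0 hXD, hexp Y hYm hY0 hYD]
  exact Summable.tsum_le_tsum hterm (hsummable X hXm hX0 hXD) (hsummable Y hYm hY0 hYD)
end
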